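/- Assume α ≥ β ≥ γ. Then the maximum of T₁ over the interval [γ/2, α/2] equals α/2 + β + γ/2 and is attained at x = γ/2, and the minimum of T₁ over [γ/2, α/2] equals β + γ and is attained at x = α/2. -/

import Mathlib

open Set

noncomputable section

/-- `AR₂(x) = √(β² + (2x − γ)² − 2β(2x − γ)·cos C)`, where
`cos C = (α² + β² − γ²)/(2αβ)` by the Cosine Law. -/
def AR2 (α β γ : ℝ) (x : ℝ) : ℝ :=
  Real.sqrt (β ^ 2 + (2 * x - γ) ^ 2
    - 2 * β * (2 * x - γ) * ((α ^ 2 + β ^ 2 - γ ^ 2) / (2 * α * β)))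

/-- `CR₁(x) = √(β² + (γ − 2x)² − 2β(γ − 2x)·cos A)`, where
`cos A = (β² + γ² − α²)/(2βγ)` by the Cosine Law. -/
def CR1 (α β γ : ℝ) (x : ℝ) : ℝ :=
  Real.sqrt (β ^ 2 + (γ - 2 * x) ^ 2
    - 2 * β * (γ - 2 * x) * ((β ^ 2 + γ ^ 2 - α ^ 2) / (2 * β * γ)))

/-- Worst-case evacuation cost of OppositeSearch in Configuration 1. -/
def T1 (α β γ : ℝ) (x : ℝ) : ℝ :=
  α / 2 + γ - x + max (AR2 α β γ x) (max β (2 * x - γ))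

/-- Worst-case evacuation cost of OppositeSearch in Configuration 2. -/
def T2 (α β γ : ℝ) (x : ℝ) : ℝ :=
  α / 2 + x + max (CR1 α β γ x) (max β (γ - 2 * x))

/-- Case `α ≥ β ≥ γ`, Configuration 1: the maximum of `T₁` over `[γ/2, α/2]` is
`α/2 + β + γ/2`, attained at `x = γ/2`, and the minimum is `β + γ`, attained at
`x = α/2`. -/
theorem stmt10 (α β γ : ℝ) (hα : 0 < α) (hβ : 0 < β) (hγ : 0 < γ)
    (h1 : α < β + γ) (h2 : β < α + γ) (h3 : γ < α + β)
    (h4 : α ^ 2 ≤ β ^ 2 + γ ^ 2) (h5 : β ^ 2 ≤ α ^ 2 + γ ^ 2)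
    (h6 : γ ^ 2 ≤ α ^ 2 + β ^ 2)
    (hαβ : β ≤ α) (hβγ : γ ≤ β) :
    IsGreatest (T1 α β γ '' Icc (γ / 2) (α / 2)) (α / 2 + β + γ / 2) ∧
      T1 α β γ (γ / 2) = α / 2 + β + γ / 2 ∧
      IsLeast (T1 α β γ '' Icc (γ / 2) (α / 2)) (β + γ) ∧
      T1 α β γ (α / 2) = β + γ := by
  have hc : ∀ x : ℝ, 2 * β * (2 * x - γ) * ((α ^ 2 + β ^ 2 - γ ^ 2) / (2 * α * β))
      = (2 * x - γ) * (α ^ 2 + β ^ 2 - γ ^ 2) / α := by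
    intro x; field_simp
  -- value at γ/2
  have hv1 : T1 α β γ (γ / 2) = α / 2 + β + γ / 2 := by
    have h0 : 2 * (γ / 2) - γ = 0 := by ring
    have hA : AR2 α β γ (γ / 2) = β := by
      unfold AR2
      rw [h0]
      have : β ^ 2 + 0 ^ 2 - 2 * β * 0 * ((α ^ 2 + β ^ 2 - γ ^ 2) / (2 * α * β)) = β ^ 2 := by ring
      rw [this, Real.sqrt_sq hβ.le]
    unfold T1
    rw [hA, h0, max_eq_left hβ.le, max_self]
    ring
  -- value at α/2
  have hv2 : T1 α β γ (α / 2) = β + γ := by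
    have hA : AR2 α β γ (α / 2) ≤ β := by
      unfold AR2
      rw [hc]
      have key : (2 * (α / 2) - γ) * (α ^ 2 + β ^ 2 - γ ^ 2) / α ≥
          β ^ 2 + (2 * (α / 2) - γ) ^ 2 - β ^ 2 := by
        rw [ge_iff_le, le_div_iff₀ hα]
        nlinarith [mul_nonneg (sub_nonneg.2 (hβγ.trans hαβ)) (sq_nonneg β),
          mul_nonneg (mul_nonneg hγ.le (sub_nonneg.2 (hβγ.trans hαβ))) (sub_nonneg.2 (hβγ.trans hαβ))]
      calc Real.sqrt (β ^ 2 + (2 * (α / 2) - γ) ^ 2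
            - (2 * (α / 2) - γ) * (α ^ 2 + β ^ 2 - γ ^ 2) / α)
          ≤ Real.sqrt (β ^ 2) := Real.sqrt_le_sqrt (by linarith)
        _ = β := Real.sqrt_sq hβ.le
    unfold T1
    have h2x : 2 * (α / 2) - γ ≤ β := by linarith
    rw [max_eq_left h2x, max_eq_right hA]
    ring
  -- upper bound
  have hub : ∀ x ∈ Icc (γ / 2) (α / 2), T1 α β γ x ≤ α / 2 + β + γ / 2 := by
    rintro x ⟨hx1, hx2⟩
    have ht0 : (0:ℝ) ≤ 2 * x - γ := by linarith
    have ht1 : 2 * x - γ ≤ α - γ := by linarith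
    have hB : (0:ℝ) ≤ β + (x - γ / 2) := by linarith
    have hA : AR2 α β γ x ≤ β + (x - γ / 2) := by
      unfold AR2
      rw [hc]
      have key : β ^ 2 + (2 * x - γ) ^ 2 - (2 * x - γ) * (α ^ 2 + β ^ 2 - γ ^ 2) / α
          ≤ (β + (x - γ / 2)) ^ 2 := by
        rw [sub_le_iff_le_add, ← sub_le_iff_le_add', le_div_iff₀ hα] at *
        nlinarith [mul_nonneg ht0 (sub_nonneg.2 ht1), mul_nonneg ht0 ht0,
          mul_nonneg (mul_nonneg ht0 ht0) hγ.le,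
          mul_nonneg ht0 (mul_nonneg hα.le (sub_nonneg.2 hβγ)),
          mul_nonneg ht0 (sub_nonneg.2 (show γ * γ ≤ β * β by nlinarith))]
      calc Real.sqrt _ ≤ Real.sqrt ((β + (x - γ / 2)) ^ 2) := Real.sqrt_le_sqrt key
        _ = β + (x - γ / 2) := Real.sqrt_sq hB
    unfold T1
    have hm : max (AR2 α β γ x) (max β (2 * x - γ)) ≤ β + (x - γ / 2) := by
      refine max_le hA (max_le (by linarith) (by linarith))
    linarith
  -- lower bound
  have hlb : ∀ x ∈ Icc (γ / 2) (α / 2), β + γ ≤ T1 α β γ x := by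
    rintro x ⟨hx1, hx2⟩
    have : β ≤ max (AR2 α β γ x) (max β (2 * x - γ)) :=
      le_trans (le_max_left _ _) (le_max_right _ _)
    unfold T1; linarith
  have hmem : (γ / 2 : ℝ) ∈ Icc (γ / 2) (α / 2) := ⟨le_refl _, by linarith⟩
  have hmem2 : (α / 2 : ℝ) ∈ Icc (γ / 2) (α / 2) := ⟨by linarith, le_refl _⟩
  refine ⟨⟨⟨γ / 2, hmem, hv1⟩, ?_⟩, hv1, ⟨⟨α / 2, hmem2, hv2⟩, ?_⟩, hv2⟩
  · rintro y ⟨x, hx, rfl⟩; exact hub x hx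
  · rintro y ⟨x, hx, rfl⟩; exact hlb x hx
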